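/- Let n ≥ 1, let G = Z_2 ≀ S_n be the hyperoctahedral group and K = Z_2 ≀ S_{n−1} its subgroup. Then the pair (G × K, diag K) is symmetric: for every x ∈ G and every y ∈ K there exist a, b ∈ K such that x⁻¹ = a·x·b and y⁻¹ = a·y·b; equivalently, (x, y)⁻¹ lies in the double coset diag(K)·(x, y)·diag(K) inside G × K. -/
import Mathlib


open scoped Classical

/-- The generalized symmetric group `Z_k ≀ S_n`: underlying set
`(Fin n → ZMod k) × Perm (Fin n)`. -/
def GS (k n : ℕ) : Type := (Fin n → ZMod k) × Equiv.Perm (Fin n)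

namespace GS

variable {k n : ℕ}

instance : Mul (GS k n) := ⟨fun x y => (fun i => x.1 (y.2⁻¹ i) + y.1 i, y.2 * x.2)⟩
instance : One (GS k n) := ⟨((0 : Fin n → ZMod k), 1)⟩
instance : Inv (GS k n) := ⟨fun x => (fun i => - x.1 (x.2 i), x.2⁻¹)⟩

theorem mul_def (x y : GS k n) :
    x * y = (fun i => x.1 (y.2⁻¹ i) + y.1 i, y.2 * x.2) := rfl

theorem one_def : (1 : GS k n) = ((0 : Fin n → ZMod k), 1) := rfl

theorem inv_def (x : GS k n) : x⁻¹ = (fun i => - x.1 (x.2 i), x.2⁻¹) := rfl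

instance : Group (GS k n) where
  mul_assoc x y z := by
    refine Prod.ext ?_ (mul_assoc z.2 y.2 x.2).symm
    funext i
    show x.1 (y.2⁻¹ (z.2⁻¹ i)) + y.1 (z.2⁻¹ i) + z.1 i
        = x.1 ((z.2 * y.2)⁻¹ i) + (y.1 (z.2⁻¹ i) + z.1 i)
    rw [mul_inv_rev, Equiv.Perm.mul_apply, add_assoc]
  one_mul x := by
    refine Prod.ext ?_ (mul_one x.2)
    funext i
    show (0 : ZMod k) + x.1 i = x.1 i
    rw [zero_add]
  mul_one x := by
    refine Prod.ext ?_ (one_mul x.2)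
    funext i
    show x.1 ((1 : Equiv.Perm (Fin n))⁻¹ i) + 0 = x.1 i
    simp
  inv_mul_cancel x := by
    refine Prod.ext ?_ (mul_inv_cancel x.2)
    funext i
    show - x.1 (x.2 (x.2⁻¹ i)) + x.1 i = 0
    simp

/-- The orbit of `i` under (the cyclic subgroup generated by) `p`, as a finset. -/
noncomputable def orbitOf (p : Equiv.Perm (Fin n)) (i : Fin n) : Finset (Fin n) :=
  Finset.univ.filter fun j => p.SameCycle i j

/-- The cycle sum of `x = (g; p)` at `i`: the sum of `g` over the orbit of `i` under `p`. -/
noncomputable def cycleSum (x : GS k n) (i : Fin n) : ZMod k :=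
  ∑ j ∈ orbitOf x.2 i, x.1 j

/-- The type invariant of `x = (g; p)`: the multiset, indexed by the orbits `O` of the cyclic
subgroup generated by `p` on `Fin n`, of the pairs `(card O, ∑_{j ∈ O} g j)`. -/
noncomputable def typeInv (x : GS k n) : Multiset (ℕ × ZMod k) :=
  (Finset.univ.image fun i => orbitOf x.2 i).val.map fun O => (O.card, ∑ j ∈ O, x.1 j)

/-- The last point of `Fin n`. -/
def lastPt (n : ℕ) (hn : 1 ≤ n) : Fin n := ⟨n - 1, by omega⟩

/-- The subgroup `Z_k ≀ S_{n-1}` of `Z_k ≀ S_n`: elements `(f; t)` with `t` fixing the last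
point `ν` of `Fin n` and `f ν = 0`. -/
def K (k n : ℕ) (hn : 1 ≤ n) : Subgroup (GS k n) where
  carrier := {z | z.2 (lastPt n hn) = lastPt n hn ∧ z.1 (lastPt n hn) = 0}
  one_mem' := by
    constructor
    · show (1 : Equiv.Perm (Fin n)) (lastPt n hn) = lastPt n hn
      rfl
    · rfl
  mul_mem' := by
    rintro ⟨f, t⟩ ⟨f', t'⟩ ⟨ht, hf⟩ ⟨ht', hf'⟩
    constructor
    · show t' (t (lastPt n hn)) = lastPt n hn
      rw [ht, ht']
    · show f (t'⁻¹ (lastPt n hn)) + f' (lastPt n hn) = 0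
      rw [Equiv.Perm.inv_eq_iff_eq.2 (show lastPt n hn = t' (lastPt n hn) from ht'.symm),
        show f (lastPt n hn) = 0 from hf, show f' (lastPt n hn) = 0 from hf', add_zero]
  inv_mem' := by
    rintro ⟨f, t⟩ ⟨ht, hf⟩
    constructor
    · show t⁻¹ (lastPt n hn) = lastPt n hn
      exact Equiv.Perm.inv_eq_iff_eq.2 (show lastPt n hn = t (lastPt n hn) from ht.symm)
    · show - f (t (lastPt n hn)) = 0
      rw [show t (lastPt n hn) = lastPt n hn from ht,
        show f (lastPt n hn) = 0 from hf, neg_zero]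

end GS
namespace HypAux

open Equiv Equiv.Perm Finset

variable {n : ℕ}

/-- Shift a zpow-equation on a point by any amount. -/
theorem pcongr {α : Type*} (p : Equiv.Perm α) (r : α) {a b : ℤ}
    (h : (p ^ a) r = (p ^ b) r) {c d : ℤ} (hcd : c + b = d + a) :
    (p ^ c) r = (p ^ d) r := by
  have key : (p ^ (c - a + a)) r = (p ^ (c - a + b)) r := by
    rw [zpow_add, zpow_add, Equiv.Perm.mul_apply, Equiv.Perm.mul_apply, h]
  rw [sub_add_cancel] at key
  rw [show d = c - a + b by omega]
  exact key

theorem zpow_one_add_apply {α : Type*} (p : Equiv.Perm α) (r : α) (c : ℤ) :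
    (p ^ (1 + c)) r = p ((p ^ c) r) := by
  rw [zpow_add, zpow_one, Equiv.Perm.mul_apply]

/-- Cycle representative: the last point if `i` is in its cycle, else `min'` of the orbit. -/
noncomputable def rep (hn : 1 ≤ n) (p : Equiv.Perm (Fin n)) (i : Fin n) : Fin n :=
  if p.SameCycle (GS.lastPt n hn) i then GS.lastPt n hn
  else (GS.orbitOf p i).min'
    ⟨i, Finset.mem_filter.mpr ⟨Finset.mem_univ i, Equiv.Perm.SameCycle.refl p i⟩⟩

theorem rep_sameCycle (hn : 1 ≤ n) (p : Equiv.Perm (Fin n)) (i : Fin n) :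
    p.SameCycle (rep hn p i) i := by
  unfold rep
  split_ifs with h
  · exact h
  · have hm := Finset.min'_mem (GS.orbitOf p i)
      ⟨i, Finset.mem_filter.mpr ⟨Finset.mem_univ i, Equiv.Perm.SameCycle.refl p i⟩⟩
    exact ((Finset.mem_filter.mp hm).2).symm

theorem rep_eq_of (hn : 1 ≤ n) (p : Equiv.Perm (Fin n)) {i j : Fin n}
    (hij : p.SameCycle i j) : rep hn p i = rep hn p j := by
  have horb : GS.orbitOf p i = GS.orbitOf p j := by
    ext x
    simp only [GS.orbitOf, Finset.mem_filter, Finset.mem_univ, true_and]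
    exact ⟨fun h => hij.symm.trans h, fun h => hij.trans h⟩
  unfold rep
  by_cases h : p.SameCycle (GS.lastPt n hn) i
  · rw [if_pos h, if_pos (h.trans hij)]
  · rw [if_neg h, if_neg (fun h' => h (h'.trans hij.symm))]
    congr 1

theorem rep_lastPt (hn : 1 ≤ n) (p : Equiv.Perm (Fin n)) :
    rep hn p (GS.lastPt n hn) = GS.lastPt n hn := if_pos (Equiv.Perm.SameCycle.refl p _)

theorem rep_idem (hn : 1 ≤ n) (p : Equiv.Perm (Fin n)) (i : Fin n) :
    rep hn p (rep hn p i) = rep hn p i := rep_eq_of hn p (rep_sameCycle hn p i)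

theorem rep_zpow_rep (hn : 1 ≤ n) (p : Equiv.Perm (Fin n)) (i : Fin n) (c : ℤ) :
    rep hn p ((p ^ c) (rep hn p i)) = rep hn p i := by
  have h1 : p.SameCycle ((p ^ c) (rep hn p i)) (rep hn p i) :=
    Equiv.Perm.SameCycle.symm ⟨c, rfl⟩
  calc rep hn p ((p ^ c) (rep hn p i)) = rep hn p (rep hn p i) := rep_eq_of hn p h1
    _ = rep hn p i := rep_idem hn p i

theorem exists_pow_rep (hn : 1 ≤ n) (p : Equiv.Perm (Fin n)) (i : Fin n) :
    ∃ m : ℕ, (p ^ m) (rep hn p i) = i := by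
  obtain ⟨m, -, hm⟩ := (rep_sameCycle hn p i).exists_pow_eq'
  exact ⟨m, hm⟩

noncomputable def dd (hn : 1 ≤ n) (p : Equiv.Perm (Fin n)) (i : Fin n) : ℕ :=
  Nat.find (exists_pow_rep hn p i)

theorem dd_spec_nat (hn : 1 ≤ n) (p : Equiv.Perm (Fin n)) (i : Fin n) :
    (p ^ dd hn p i) (rep hn p i) = i := Nat.find_spec (exists_pow_rep hn p i)

theorem dd_spec (hn : 1 ≤ n) (p : Equiv.Perm (Fin n)) (i : Fin n) :
    (p ^ (dd hn p i : ℤ)) (rep hn p i) = i := by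
  rw [zpow_natCast]; exact dd_spec_nat hn p i

theorem dd_min (hn : 1 ≤ n) (p : Equiv.Perm (Fin n)) (i : Fin n) {m : ℕ}
    (hm : (p ^ m) (rep hn p i) = i) : dd hn p i ≤ m := Nat.find_le hm

theorem dd_lastPt (hn : 1 ≤ n) (p : Equiv.Perm (Fin n)) :
    dd hn p (GS.lastPt n hn) = 0 := by
  have h0 : (p ^ (0:ℕ)) (rep hn p (GS.lastPt n hn)) = GS.lastPt n hn := by
    rw [pow_zero, Equiv.Perm.one_apply, rep_lastPt]
  exact Nat.le_zero.mp (dd_min hn p _ h0)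

/-- The reversing involution on each cycle. -/
noncomputable def TT (hn : 1 ≤ n) (p : Equiv.Perm (Fin n)) (i : Fin n) : Fin n :=
  (p ^ (-(dd hn p i : ℤ))) (rep hn p i)

theorem rep_TT (hn : 1 ≤ n) (p : Equiv.Perm (Fin n)) (i : Fin n) :
    rep hn p (TT hn p i) = rep hn p i := rep_zpow_rep hn p i _

theorem TT_lastPt (hn : 1 ≤ n) (p : Equiv.Perm (Fin n)) :
    TT hn p (GS.lastPt n hn) = GS.lastPt n hn := by
  unfold TT
  rw [dd_lastPt, rep_lastPt]
  simp

theorem TT_TT (hn : 1 ≤ n) (p : Equiv.Perm (Fin n)) (i : Fin n) :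
    TT hn p (TT hn p i) = i := by
  set r := rep hn p i with hr
  have h1 : (p ^ (dd hn p i : ℤ)) r = i := dd_spec hn p i
  have h2 : (p ^ (dd hn p (TT hn p i) : ℤ)) r = (p ^ (-(dd hn p i : ℤ))) r := by
    have := dd_spec hn p (TT hn p i)
    rwa [rep_TT] at this
  have h3 : (p ^ ((dd hn p (TT hn p i) : ℤ) + (dd hn p i : ℤ))) r = (p ^ (0:ℤ)) r :=
    pcongr p r h2 (by ring)
  have h4 : (p ^ ((dd hn p i : ℤ))) r = (p ^ (-(dd hn p (TT hn p i) : ℤ))) r :=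
    pcongr p r h3 (by ring)
  show (p ^ (-(dd hn p (TT hn p i) : ℤ))) (rep hn p (TT hn p i)) = i
  rw [rep_TT, ← hr, ← h4]
  exact h1

theorem TT_p_TT (hn : 1 ≤ n) (p : Equiv.Perm (Fin n)) (i : Fin n) :
    TT hn p (p (TT hn p i)) = p⁻¹ i := by
  have h1 : (p ^ (dd hn p i : ℤ)) (rep hn p i) = i := dd_spec hn p i
  have hpT : p (TT hn p i) = (p ^ (1 + -(dd hn p i : ℤ))) (rep hn p i) := by
    rw [zpow_one_add_apply]; rfl
  have hrepT : rep hn p (p (TT hn p i)) = rep hn p i := by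
    rw [hpT]; exact rep_zpow_rep hn p i _
  have h2 : (p ^ (dd hn p (p (TT hn p i)) : ℤ)) (rep hn p i)
      = (p ^ (1 + -(dd hn p i : ℤ))) (rep hn p i) := by
    have ha := dd_spec hn p (p (TT hn p i))
    rw [hrepT] at ha
    rw [ha, hpT]
  have h5 : (p ^ ((dd hn p i : ℤ) - 1)) (rep hn p i) = p⁻¹ i := by
    have hx : (p ^ (-1 + (dd hn p i : ℤ))) (rep hn p i)
        = p⁻¹ ((p ^ (dd hn p i : ℤ)) (rep hn p i)) := by
      rw [zpow_add, Equiv.Perm.mul_apply, zpow_neg_one]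
    rw [h1] at hx
    rw [show (dd hn p i : ℤ) - 1 = -1 + (dd hn p i : ℤ) by ring, hx]
  have h6 : (p ^ ((dd hn p i : ℤ) - 1)) (rep hn p i)
      = (p ^ (-(dd hn p (p (TT hn p i)) : ℤ))) (rep hn p i) :=
    pcongr p _ h2 (by ring)
  show (p ^ (-(dd hn p (p (TT hn p i)) : ℤ))) (rep hn p (p (TT hn p i))) = p⁻¹ i
  rw [hrepT, ← h6]
  exact h5

theorem TT_pinv (hn : 1 ≤ n) (p : Equiv.Perm (Fin n)) (i : Fin n) :
    TT hn p (p⁻¹ i) = p (TT hn p i) := by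
  have := congrArg (TT hn p) (TT_p_TT hn p i)
  rwa [TT_TT, eq_comm] at this

end HypAux
namespace HypAux

variable {n : ℕ}

/-- The sign function along cycles. -/
noncomputable def ff (hn : 1 ≤ n) (p : Equiv.Perm (Fin n)) (g : Fin n → ZMod 2)
    (i : Fin n) : ZMod 2 :=
  ∑ l ∈ Finset.range (dd hn p i),
    (g ((p ^ ((l : ℤ) + 1)) (rep hn p i)) + g ((p ^ (-(l : ℤ))) (rep hn p i)))

theorem ff_lastPt (hn : 1 ≤ n) (p : Equiv.Perm (Fin n)) (g : Fin n → ZMod 2) :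
    ff hn p g (GS.lastPt n hn) = 0 := by
  unfold ff
  rw [dd_lastPt]
  simp

theorem two_self : ∀ a : ZMod 2, a + a = 0 := by decide

theorem neg_self : ∀ a : ZMod 2, -a = a := by decide

theorem ff_key (hn : 1 ≤ n) (p : Equiv.Perm (Fin n)) (g : Fin n → ZMod 2) (i : Fin n) :
    ff hn p g (p i) + ff hn p g i = g (p i) + g (TT hn p i) := by
  have h1 : (p ^ dd hn p i) (rep hn p i) = i := dd_spec_nat hn p i
  have hrp : rep hn p (p i) = rep hn p i := by
    have h2 : p i = (p ^ (1 + (dd hn p i : ℤ))) (rep hn p i) := by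
      rw [zpow_one_add_apply, zpow_natCast, h1]
    rw [h2, rep_zpow_rep]
  have hwit : (p ^ (dd hn p i + 1)) (rep hn p i) = p i := by
    rw [pow_succ', Equiv.Perm.mul_apply, h1]
  have hwitz : (p ^ ((dd hn p i : ℤ) + 1)) (rep hn p i) = p i := by
    rw [show ((dd hn p i : ℤ) + 1) = ((dd hn p i + 1 : ℕ) : ℤ) by push_cast; ring,
      zpow_natCast]
    exact hwit
  have hgT : (p ^ (-(dd hn p i : ℤ))) (rep hn p i) = TT hn p i := rfl
  -- the minimal period L of the cycle of i
  have hper : ∃ m : ℕ, 0 < m ∧ (p ^ m) (rep hn p i) = rep hn p i :=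
    ⟨orderOf p, orderOf_pos p, by rw [pow_orderOf_eq_one]; rfl⟩
  set L := Nat.find hper with hLdef
  obtain ⟨hL0, hLfix⟩ : 0 < L ∧ (p ^ L) (rep hn p i) = rep hn p i := Nat.find_spec hper
  have hLmin : ∀ m : ℕ, 0 < m → (p ^ m) (rep hn p i) = rep hn p i → L ≤ m :=
    fun m hm1 hm2 => Nat.find_le ⟨hm1, hm2⟩
  have hfixmul : ∀ q : ℕ, ((p ^ L) ^ q) (rep hn p i) = rep hn p i := by
    intro q
    induction q with
    | zero => rfl
    | succ q ih => rw [pow_succ, Equiv.Perm.mul_apply, hLfix, ih]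
  have hmod : ∀ a : ℕ, (p ^ a) (rep hn p i) = (p ^ (a % L)) (rep hn p i) := by
    intro a
    conv_lhs => rw [← Nat.mod_add_div a L]
    rw [pow_add, Equiv.Perm.mul_apply, pow_mul, hfixmul]
  have hjlt : dd hn p i < L := by
    have hle : dd hn p i ≤ dd hn p i % L := dd_min hn p i (by rw [← hmod]; exact h1)
    have hmlt : dd hn p i % L < L := Nat.mod_lt _ hL0
    omega
  by_cases hcase : dd hn p i + 1 < L
  · -- no wrap-around : dd (p i) = dd i + 1
    have hj' : dd hn p (p i) = dd hn p i + 1 := by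
      have hle : dd hn p (p i) ≤ dd hn p i + 1 := dd_min hn p (p i) (by rw [hrp]; exact hwit)
      by_contra hne
      have hlt : dd hn p (p i) < dd hn p i + 1 := lt_of_le_of_ne hle hne
      have h2 : (p ^ (dd hn p (p i) : ℤ)) (rep hn p i)
          = (p ^ ((dd hn p i : ℤ) + 1)) (rep hn p i) := by
        have ha := dd_spec hn p (p i)
        rw [hrp] at ha
        rw [ha, hwitz]
      have h3 : (p ^ ((dd hn p i + 1 - dd hn p (p i) : ℕ) : ℤ)) (rep hn p i)
          = (p ^ (0 : ℤ)) (rep hn p i) :=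
        pcongr p _ h2.symm (by omega)
      have h4 : (p ^ (dd hn p i + 1 - dd hn p (p i))) (rep hn p i) = rep hn p i := by
        rw [zpow_natCast, zpow_zero] at h3
        simpa using h3
      have h5 : L ≤ dd hn p i + 1 - dd hn p (p i) := hLmin _ (by omega) h4
      omega
    unfold ff
    rw [hj', hrp, Finset.sum_range_succ]
    rw [hwitz, hgT]
    linear_combination two_self (∑ l ∈ Finset.range (dd hn p i),
      (g ((p ^ ((l : ℤ) + 1)) (rep hn p i)) + g ((p ^ (-(l : ℤ))) (rep hn p i))))
  · -- wrap-around : dd i + 1 = L and dd (p i) = 0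
    have hL1 : dd hn p i + 1 = L := by omega
    have hpi_r : p i = rep hn p i := by rw [← hwit, hL1, hLfix]
    have hj' : dd hn p (p i) = 0 := by
      have hle : dd hn p (p i) ≤ 0 := dd_min hn p (p i)
        (by rw [hrp, pow_zero, Equiv.Perm.one_apply]; exact hpi_r.symm)
      omega
    have hLz : (p ^ (L : ℤ)) (rep hn p i) = (p ^ (0 : ℤ)) (rep hn p i) := by
      rw [zpow_natCast, zpow_zero]
      simpa using hLfix
    have hrefl : ∑ l ∈ Finset.range L, g ((p ^ (-(l : ℤ))) (rep hn p i))
        = ∑ l ∈ Finset.range L, g ((p ^ ((l : ℤ) + 1)) (rep hn p i)) := by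
      calc ∑ l ∈ Finset.range L, g ((p ^ (-(l : ℤ))) (rep hn p i))
          = ∑ l ∈ Finset.range L, g ((p ^ (-((L - 1 - l : ℕ) : ℤ))) (rep hn p i)) :=
            (Finset.sum_range_reflect (fun l => g ((p ^ (-(l : ℤ))) (rep hn p i))) L).symm
        _ = ∑ l ∈ Finset.range L, g ((p ^ ((l : ℤ) + 1)) (rep hn p i)) := by
            refine Finset.sum_congr rfl fun l hl => ?_
            have hlL : l < L := Finset.mem_range.mp hl
            congr 1
            exact pcongr p _ hLz.symm (by omega)
    have hsumzero : ∑ l ∈ Finset.range L,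
        (g ((p ^ ((l : ℤ) + 1)) (rep hn p i)) + g ((p ^ (-(l : ℤ))) (rep hn p i))) = 0 := by
      rw [Finset.sum_add_distrib, hrefl]
      exact two_self _
    rw [← hL1, Finset.sum_range_succ] at hsumzero
    rw [hwitz, hgT] at hsumzero
    unfold ff
    rw [hj', hrp]
    simp only [Finset.sum_range_zero]
    linear_combination hsumzero - two_self (g (p i) + g (TT hn p i))

/-- The core lemma: every element of `Z_2 ≀ S_n` is inverted by conjugation by an
element of `K`. -/
theorem exists_conj_inv (hn : 1 ≤ n) (z : GS 2 n) :
    ∃ c ∈ GS.K 2 n hn, c⁻¹ * z * c = z⁻¹ := by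
  obtain ⟨g, p⟩ := z
  refine ⟨(ff hn p g, ⟨TT hn p, TT hn p, TT_TT hn p, TT_TT hn p⟩), ⟨?_, ?_⟩, ?_⟩
  · show TT hn p (GS.lastPt n hn) = GS.lastPt n hn
    exact TT_lastPt hn p
  · exact ff_lastPt hn p g
  · refine Prod.ext ?_ ?_
    · funext i
      show -(ff hn p g (TT hn p (p⁻¹ (TT hn p i)))) + g (TT hn p i) + ff hn p g i
          = -(g (p i))
      rw [TT_pinv, TT_TT, neg_self, neg_self]
      linear_combination ff_key hn p g i + two_self (g (TT hn p i))
    · show (⟨TT hn p, TT hn p, TT_TT hn p, TT_TT hn p⟩ : Equiv.Perm (Fin n))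
          * (p * (⟨TT hn p, TT hn p, TT_TT hn p, TT_TT hn p⟩ : Equiv.Perm (Fin n))⁻¹) = p⁻¹
      exact Equiv.ext fun i => TT_p_TT hn p i

end HypAux

open GS in
/-- The pair `(G × K, diag K)` with `G = Z_2 ≀ S_n`, `K = Z_2 ≀ S_{n-1}` is
symmetric: for every `x ∈ G` and `y ∈ K` there are `a, b ∈ K` with `x⁻¹ = a * x * b` and
`y⁻¹ = a * y * b`. -/
theorem hyperoctahedral_symmetric_pair (n : ℕ) (hn : 1 ≤ n)
    (x y : GS 2 n) (hy : y ∈ K 2 n hn) :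
    ∃ a ∈ K 2 n hn, ∃ b ∈ K 2 n hn, x⁻¹ = a * x * b ∧ y⁻¹ = a * y * b := by
  obtain ⟨c, hc, hcz⟩ := HypAux.exists_conj_inv hn (y⁻¹ * x)
  refine ⟨c⁻¹ * y⁻¹, mul_mem (inv_mem hc) (inv_mem hy),
    c * y⁻¹, mul_mem hc (inv_mem hy), ?_, ?_⟩
  · rw [show c⁻¹ * y⁻¹ * x * (c * y⁻¹) = c⁻¹ * (y⁻¹ * x) * c * y⁻¹ by group, hcz]
    group
  · group
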